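/- arXiv:2601.09409 — 2 statements merged into one kernel-verified Lean document; each statement's English description precedes it below -/
import Mathlib

section
/- Let Σ be an alphabet. A language L ⊆ List Σ is the support of a series realized by a reversible weighted automaton over ZMod 2 with exactly one initial state if and only if L is recognized by a reversible NFA over Σ with exactly one initial state. In symbols: RevL₁(ZMod 2, Σ) = RevL₁(𝔹, Σ). -/
open Matrix

namespace RevWA

/-- A weighted automaton over a semiring `S` and alphabet `α`, given by a linear
representation: number of states `n`, initial weight vector, transition matrices,
and final weight vector. -/
structure WA (S : Type) [Semiring S] (α : Type) where
  n : ℕ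
  init : Fin n → S
  trans : α → Matrix (Fin n) (Fin n) S
  final : Fin n → S

variable {S : Type} [Semiring S] {α : Type}

/-- The matrix associated to a word: product of the transition matrices of its letters. -/
def WA.matWord (A : WA S α) (w : List α) : Matrix (Fin A.n) (Fin A.n) S :=
  (w.map A.trans).prod

/-- The series realized by a weighted automaton: `i ⬝ μ(w) ⬝ f`. -/
def WA.series (A : WA S α) : List α → S :=
  fun w => A.init ⬝ᵥ (A.matWord w).mulVec A.final

/-- A matrix has at most one nonzero entry in each row. -/
def rowOk {n : ℕ} (M : Matrix (Fin n) (Fin n) S) : Prop :=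
  ∀ i j j', M i j ≠ 0 → M i j' ≠ 0 → j = j'

/-- A matrix has at most one nonzero entry in each column. -/
def colOk {n : ℕ} (M : Matrix (Fin n) (Fin n) S) : Prop :=
  ∀ i i' j, M i j ≠ 0 → M i' j ≠ 0 → i = i'

/-- A weighted automaton is reversible if each transition matrix has at most one
nonzero entry in each row and at most one nonzero entry in each column. -/
def WA.Reversible (A : WA S α) : Prop :=
  ∀ a : α, rowOk (A.trans a) ∧ colOk (A.trans a)

/-- A weighted automaton has exactly one initial state. -/
def WA.OneInitial (A : WA S α) : Prop :=
  ∃! q : Fin A.n, A.init q ≠ 0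

/-- `Rev S α`: series realized by reversible weighted automata over `S` and `α`. -/
def Rev (S : Type) [Semiring S] (α : Type) : Set (List α → S) :=
  {r | ∃ A : WA S α, A.Reversible ∧ A.series = r}

/-- `Rev₁ S α`: series realized by reversible weighted automata over `S` and `α`
with exactly one initial state. -/
def Rev1 (S : Type) [Semiring S] (α : Type) : Set (List α → S) :=
  {r | ∃ A : WA S α, A.Reversible ∧ A.OneInitial ∧ A.series = r}

/-- The support of a series. -/
def supp (r : List α → S) : Set (List α) :=
  {w | r w ≠ 0}

/-- `RevL S α`: supports of series realized by reversible weighted automata. -/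
def RevL (S : Type) [Semiring S] (α : Type) : Set (Set (List α)) :=
  {L | ∃ r ∈ Rev S α, supp r = L}

/-- `RevL₁ S α`: supports of series realized by reversible weighted automata with
exactly one initial state. -/
def RevL1 (S : Type) [Semiring S] (α : Type) : Set (Set (List α)) :=
  {L | ∃ r ∈ Rev1 S α, supp r = L}

/-- The characteristic series of a language `L` over `S`. -/
noncomputable def charSeries (S : Type) [Semiring S] {α : Type} (L : Set (List α)) :
    List α → S :=
  L.indicator 1

/-- A reversible nondeterministic finite automaton: deterministic and
codeterministic transition relation. -/
structure RevNFA (α : Type) where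
  Q : Type
  fintypeQ : Fintype Q
  δ : Q → α → Q → Prop
  I : Set Q
  F : Set Q
  det : ∀ p a q q', δ p a q → δ p a q' → q = q'
  codet : ∀ p p' a q, δ p a q → δ p' a q → p = p'

/-- Paths in a reversible NFA. -/
inductive RevNFA.Path {α : Type} (A : RevNFA α) : A.Q → List α → A.Q → Prop
  | nil (q : A.Q) : RevNFA.Path A q [] q
  | cons {p q r : A.Q} {a : α} {w : List α} :
      A.δ p a q → RevNFA.Path A q w r → RevNFA.Path A p (a :: w) r

/-- The language recognized by a reversible NFA. -/
def RevNFA.lang {α : Type} (A : RevNFA α) : Set (List α) :=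
  {w | ∃ p ∈ A.I, ∃ q ∈ A.F, A.Path p w q}

/-- A reversible NFA has exactly one initial state. -/
def RevNFA.OneInitial {α : Type} (A : RevNFA α) : Prop :=
  ∃ q : A.Q, A.I = {q}

/-- `RevL(𝔹,α)`: languages recognized by reversible NFAs. -/
def RevLB (α : Type) : Set (Set (List α)) :=
  {L | ∃ A : RevNFA α, A.lang = L}

/-- `RevL₁(𝔹,α)`: languages recognized by reversible NFAs with exactly one
initial state. -/
def RevL1B (α : Type) : Set (Set (List α)) :=
  {L | ∃ A : RevNFA α, A.OneInitial ∧ A.lang = L}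

end RevWA

section Aux
open RevWA

lemma sum_ne_iff {n : ℕ} {u v : Fin n → ZMod 2}
    (h : ∀ j j', u j ≠ 0 → u j' ≠ 0 → j = j') :
    (∑ j, u j * v j) ≠ 0 ↔ ∃ j, u j ≠ 0 ∧ v j ≠ 0 := by
  constructor
  · intro hs
    by_contra hn
    push_neg at hn
    apply hs
    apply Finset.sum_eq_zero
    intro k _
    by_cases hk : u k = 0
    · simp [hk]
    · simp [hn k hk]
  · rintro ⟨k, hu, hv⟩
    rw [Finset.sum_eq_single k]
    · exact mul_ne_zero hu hv
    · intro b _ hb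
      by_cases hub : u b = 0
      · simp [hub]
      · exact absurd (h _ _ hu hub) (Ne.symm hb)
    · simp

lemma mul_entry_ne_iff {n : ℕ} {M N : Matrix (Fin n) (Fin n) (ZMod 2)}
    (hM : rowOk M) (p q : Fin n) :
    (M * N) p q ≠ 0 ↔ ∃ k, M p k ≠ 0 ∧ N k q ≠ 0 := by
  rw [Matrix.mul_apply]
  exact sum_ne_iff (fun j j' => hM p j j')

lemma rowOk_mul {n : ℕ} {M N : Matrix (Fin n) (Fin n) (ZMod 2)}
    (hM : rowOk M) (hN : rowOk N) : rowOk (M * N) := by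
  intro i j j' h h'
  rw [mul_entry_ne_iff hM] at h h'
  obtain ⟨k, hk1, hk2⟩ := h
  obtain ⟨k', hk1', hk2'⟩ := h'
  have hkk : k = k' := hM i k k' hk1 hk1'
  subst hkk
  exact hN k j j' hk2 hk2'

lemma rowOk_one {n : ℕ} : rowOk (1 : Matrix (Fin n) (Fin n) (ZMod 2)) := by
  intro i j j' h h'
  have h1 : i = j := by
    by_contra hn; exact h (Matrix.one_apply_ne hn)
  have h2 : i = j' := by
    by_contra hn; exact h' (Matrix.one_apply_ne hn)
  exact h1 ▸ h2

lemma matWord_rowOk {α : Type} (A : WA (ZMod 2) α) (hA : A.Reversible)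
    (w : List α) : rowOk (A.matWord w) := by
  unfold WA.matWord
  induction w with
  | nil => simpa using rowOk_one
  | cons a w ih =>
    simp only [List.map_cons, List.prod_cons]
    exact rowOk_mul (hA a).1 ih

lemma path_nil_eq {α : Type} (B : RevNFA α) {p q : B.Q} (h : B.Path p [] q) :
    p = q := by cases h; rfl

lemma path_cons_inv {α : Type} (B : RevNFA α) {p q : B.Q} {a : α} {w : List α}
    (h : B.Path p (a :: w) q) : ∃ r, B.δ p a r ∧ B.Path r w q := by
  cases h with | cons hd tl => exact ⟨_, hd, tl⟩

lemma key_path {α : Type} {n : ℕ} (t : α → Matrix (Fin n) (Fin n) (ZMod 2))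
    (ht : ∀ a, rowOk (t a)) (B : RevNFA α) (e : Fin n ≃ B.Q)
    (hδ : ∀ p a q, B.δ (e p) a (e q) ↔ t a p q ≠ 0) :
    ∀ (w : List α) (p q : Fin n),
      ((w.map t).prod p q ≠ 0 ↔ B.Path (e p) w (e q)) := by
  intro w
  induction w with
  | nil =>
    intro p q
    simp only [List.map_nil, List.prod_nil]
    constructor
    · intro h
      have hpq : p = q := by
        by_contra hne
        exact h (Matrix.one_apply_ne hne)
      subst hpq
      exact RevNFA.Path.nil _
    · intro h
      have hpq : p = q := e.injective (path_nil_eq B h)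
      subst hpq
      simp [Matrix.one_apply]
  | cons a w ih =>
    intro p q
    simp only [List.map_cons, List.prod_cons]
    rw [mul_entry_ne_iff (ht a)]
    constructor
    · rintro ⟨k, h1, h2⟩
      exact RevNFA.Path.cons ((hδ p a k).2 h1) ((ih k q).1 h2)
    · intro h
      obtain ⟨r, hd, tl⟩ := path_cons_inv B h
      refine ⟨e.symm r, (hδ p a (e.symm r)).1 ?_, (ih (e.symm r) q).2 ?_⟩ <;>
        rw [Equiv.apply_symm_apply] <;> assumption

lemma series_ne_iff {α : Type} (A : WA (ZMod 2) α) (hA : A.Reversible)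
    (q₀ : Fin A.n) (h₀ : A.init q₀ ≠ 0) (hu : ∀ q, A.init q ≠ 0 → q = q₀)
    (w : List α) :
    A.series w ≠ 0 ↔ ∃ q, A.matWord w q₀ q ≠ 0 ∧ A.final q ≠ 0 := by
  have hrow := matWord_rowOk A hA w
  have h1 : A.series w = ∑ p, A.init p * ∑ q, A.matWord w p q * A.final q := rfl
  rw [h1, sum_ne_iff (fun j j' hj hj' => (hu j hj).trans (hu j' hj').symm)]
  constructor
  · rintro ⟨p, hp, hm⟩
    have hpq := hu p hp
    subst hpq
    exact (sum_ne_iff (fun j j' => hrow p j j')).1 hm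
  · rintro ⟨q, hq, hf⟩
    exact ⟨q₀, h₀, (sum_ne_iff (fun j j' => hrow q₀ j j')).2 ⟨q, hq, hf⟩⟩

end Aux

open RevWA in
theorem stmt4 (α : Type) [Fintype α] [Nonempty α] :
    RevL1 (ZMod 2) α = RevL1B α := by
  classical
  ext L
  constructor
  · rintro ⟨r, ⟨A, hA, ⟨q₀, h₀, hu⟩, hr⟩, hsupp⟩
    set B : RevNFA α := ⟨Fin A.n, inferInstance,
      fun p a q => A.trans a p q ≠ 0, {q₀}, {q | A.final q ≠ 0},
      fun p a q q' h h' => (hA a).1 p q q' h h',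
      fun p p' a q h h' => (hA a).2 p p' q h h'⟩ with hB
    refine ⟨B, ⟨q₀, rfl⟩, ?_⟩
    subst hr hsupp
    ext w
    have hk := key_path A.trans (fun a => (hA a).1) B (Equiv.refl (Fin A.n))
      (fun p a q => Iff.rfl) w
    constructor
    · rintro ⟨p, hp, q, hq, hpath⟩
      have hpq : p = q₀ := hp
      rw [hpq] at hpath
      exact (series_ne_iff A hA q₀ h₀ hu w).2 ⟨q, (hk q₀ q).2 hpath, hq⟩
    · intro hw
      obtain ⟨q, hm, hf⟩ := (series_ne_iff A hA q₀ h₀ hu w).1 hw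
      exact ⟨q₀, rfl, q, hf, (hk q₀ q).1 hm⟩
  · rintro ⟨B, ⟨s₀, hI⟩, hL⟩
    letI : Fintype B.Q := B.fintypeQ
    set n := Fintype.card B.Q with hn
    set e : Fin n ≃ B.Q := (Fintype.equivFin B.Q).symm with he
    set A : WA (ZMod 2) α :=
      ⟨n, fun i => if e i = s₀ then 1 else 0,
        fun a i j => if B.δ (e i) a (e j) then 1 else 0,
        fun i => if e i ∈ B.F then 1 else 0⟩ with hAdef
    have htrans : ∀ (p : Fin n) (a : α) (q : Fin n),
        B.δ (e p) a (e q) ↔ A.trans a p q ≠ 0 := by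
      intro p a q
      simp only [A]
      by_cases h : B.δ (e p) a (e q) <;> simp [h]
    have hA : A.Reversible := by
      intro a
      constructor
      · intro i j j' h h'
        exact e.injective (B.det (e i) a (e j) (e j')
          ((htrans i a j).2 h) ((htrans i a j').2 h'))
      · intro i i' j h h'
        exact e.injective (B.codet (e i) (e i') a (e j)
          ((htrans i a j).2 h) ((htrans i' a j).2 h'))
    have h₀ : A.init (e.symm s₀) ≠ 0 := by
      simp [A]
    have hu : ∀ q, A.init q ≠ 0 → q = e.symm s₀ := by
      intro q hq
      simp only [A, ne_eq, ite_eq_right_iff, one_ne_zero, imp_false,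
        not_not] at hq
      exact e.eq_symm_apply.2 hq
    refine ⟨A.series, ⟨A, hA, ⟨e.symm s₀, h₀, fun q hq => hu q hq⟩, rfl⟩, ?_⟩
    subst hL
    ext w
    have hk := key_path A.trans (fun a => (hA a).1) B e htrans w
    constructor
    · intro hw
      obtain ⟨q, hm, hf⟩ := (series_ne_iff A hA (e.symm s₀) h₀ hu w).1 hw
      refine ⟨s₀, by rw [hI]; rfl, e q, ?_, ?_⟩
      · simpa [A] using hf
      · have := (hk (e.symm s₀) q).1 hm
        rwa [Equiv.apply_symm_apply] at this
    · rintro ⟨p, hp, q, hq, hpath⟩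
      rw [hI] at hp
      have hps : p = s₀ := hp
      rw [hps] at hpath
      apply (series_ne_iff A hA (e.symm s₀) h₀ hu w).2
      refine ⟨e.symm q, ?_, ?_⟩
      · apply (hk (e.symm s₀) (e.symm q)).2
        rwa [Equiv.apply_symm_apply, Equiv.apply_symm_apply]
      · simp [A, hq]
end

section
/- Let R be a nontrivial ring ((0 : R) ≠ 1), Σ an alphabet, and L ∈ RevL(ZMod 2, Σ). Then the characteristic series 𝟙_L of L over R belongs to Rev(R,Σ), and consequently L ∈ RevL(R,Σ). -/
open Matrix

namespace RevWAAux

open RevWA Matrix Finset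

variable {α : Type}

lemma matWord_nil {S : Type} [Semiring S] (A : WA S α) : A.matWord [] = 1 := rfl

lemma matWord_cons {S : Type} [Semiring S] (A : WA S α) (a : α) (w : List α) :
    A.matWord (a :: w) = A.trans a * A.matWord w := by
  simp [WA.matWord]

section MatLemmas

variable {n : ℕ}

lemma exists_of_mul_ne_zero {S : Type} [Semiring S] {M M' : Matrix (Fin n) (Fin n) S}
    {p r : Fin n} (h : (M * M') p r ≠ 0) : ∃ q, M p q ≠ 0 ∧ M' q r ≠ 0 := by
  rw [Matrix.mul_apply] at h
  obtain ⟨q, _, hq⟩ := Finset.exists_ne_zero_of_sum_ne_zero h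
  exact ⟨q, left_ne_zero_of_mul hq, right_ne_zero_of_mul hq⟩

lemma rowOk_mul {S : Type} [Semiring S] {M M' : Matrix (Fin n) (Fin n) S}
    (hM : rowOk M) (hM' : rowOk M') : rowOk (M * M') := by
  intro p r r' h h'
  obtain ⟨q, hq1, hq2⟩ := exists_of_mul_ne_zero h
  obtain ⟨q', hq1', hq2'⟩ := exists_of_mul_ne_zero h'
  cases hM p q q' hq1 hq1'
  exact hM' q r r' hq2 hq2'

lemma colOk_mul {S : Type} [Semiring S] {M M' : Matrix (Fin n) (Fin n) S}
    (hM : colOk M) (hM' : colOk M') : colOk (M * M') := by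
  intro p p' r h h'
  obtain ⟨q, hq1, hq2⟩ := exists_of_mul_ne_zero h
  obtain ⟨q', hq1', hq2'⟩ := exists_of_mul_ne_zero h'
  cases hM' q q' r hq2 hq2'
  exact hM p p' q hq1 hq1'

lemma rowOk_one {S : Type} [Semiring S] : rowOk (1 : Matrix (Fin n) (Fin n) S) := by
  intro i j j' h h'
  have h1 : i = j := by
    by_contra hc
    exact h (Matrix.one_apply_ne hc)
  have h2 : i = j' := by
    by_contra hc
    exact h' (Matrix.one_apply_ne hc)
  rw [← h1, ← h2]

lemma colOk_one {S : Type} [Semiring S] : colOk (1 : Matrix (Fin n) (Fin n) S) := by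
  intro i i' j h h'
  have h1 : i = j := by
    by_contra hc
    exact h (Matrix.one_apply_ne hc)
  have h2 : i' = j := by
    by_contra hc
    exact h' (Matrix.one_apply_ne hc)
  rw [h1, h2]

/-- `cond M S T` : `S` is contained in the domain of the partial injection `M` and `T`
is the exact image of `S`. -/
def cond (M : Matrix (Fin n) (Fin n) (ZMod 2)) (S T : Finset (Fin n)) : Prop :=
  (∀ p ∈ S, ∃ q ∈ T, M p q ≠ 0) ∧ (∀ q ∈ T, ∃ p ∈ S, M p q ≠ 0)

instance (M : Matrix (Fin n) (Fin n) (ZMod 2)) (S T : Finset (Fin n)) :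
    Decidable (cond M S T) :=
  (@instDecidableAnd _ _ (@Finset.decidableDforallFinset _ _ _ (fun _ _ => inferInstance))
    (@Finset.decidableDforallFinset _ _ _ (fun _ _ => inferInstance)) :
    Decidable ((∀ p ∈ S, ∃ q ∈ T, M p q ≠ 0) ∧ (∀ q ∈ T, ∃ p ∈ S, M p q ≠ 0)))

lemma cond_right_subset {M : Matrix (Fin n) (Fin n) (ZMod 2)} (hM : rowOk M)
    {S T T' : Finset (Fin n)} (h : cond M S T) (h' : cond M S T') : T ⊆ T' := by
  intro q hq
  obtain ⟨p, hp, hpq⟩ := h.2 q hq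
  obtain ⟨q', hq', hpq'⟩ := h'.1 p hp
  cases hM p q q' hpq hpq'
  exact hq'

lemma cond_right_unique {M : Matrix (Fin n) (Fin n) (ZMod 2)} (hM : rowOk M)
    {S T T' : Finset (Fin n)} (h : cond M S T) (h' : cond M S T') : T = T' :=
  Finset.Subset.antisymm (cond_right_subset hM h h') (cond_right_subset hM h' h)

lemma cond_left_subset {M : Matrix (Fin n) (Fin n) (ZMod 2)} (hM : colOk M)
    {S S' T : Finset (Fin n)} (h : cond M S T) (h' : cond M S' T) : S ⊆ S' := by
  intro p hp
  obtain ⟨q, hq, hpq⟩ := h.1 p hp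
  obtain ⟨p', hp', hpq'⟩ := h'.2 q hq
  cases hM p p' q hpq hpq'
  exact hp'

lemma cond_left_unique {M : Matrix (Fin n) (Fin n) (ZMod 2)} (hM : colOk M)
    {S S' T : Finset (Fin n)} (h : cond M S T) (h' : cond M S' T) : S = S' :=
  Finset.Subset.antisymm (cond_left_subset hM h h') (cond_left_subset hM h' h)

lemma mul_apply_collapse {M M' : Matrix (Fin n) (Fin n) (ZMod 2)} (hM : rowOk M)
    {p q r : Fin n} (hpq : M p q ≠ 0) : (M * M') p r = M p q * M' q r := by
  rw [Matrix.mul_apply]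
  refine Finset.sum_eq_single q (fun x _ hx => ?_) (fun h => absurd (mem_univ q) h)
  have hz : M p x = 0 := by
    by_contra hc
    exact hx (hM p x q hc hpq)
  rw [hz, zero_mul]

lemma cond_mul {M M' : Matrix (Fin n) (Fin n) (ZMod 2)} (hM : rowOk M)
    {S T U : Finset (Fin n)} (h : cond M S T) (h' : cond M' T U) : cond (M * M') S U := by
  constructor
  · intro p hp
    obtain ⟨q, hq, hpq⟩ := h.1 p hp
    obtain ⟨r, hr, hqr⟩ := h'.1 q hq
    exact ⟨r, hr, by rw [mul_apply_collapse hM hpq]; exact mul_ne_zero hpq hqr⟩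
  · intro r hr
    obtain ⟨q, hq, hqr⟩ := h'.2 r hr
    obtain ⟨p, hp, hpq⟩ := h.2 q hq
    exact ⟨p, hp, by rw [mul_apply_collapse hM hpq]; exact mul_ne_zero hpq hqr⟩

/-- The image of `S` under the partial injection `M`. -/
def imageT (M : Matrix (Fin n) (Fin n) (ZMod 2)) (S : Finset (Fin n)) : Finset (Fin n) :=
  univ.filter (fun q => ∃ p ∈ S, M p q ≠ 0)

lemma cond_of_mul {M M' : Matrix (Fin n) (Fin n) (ZMod 2)} (hM : rowOk M)
    {S U : Finset (Fin n)} (h : cond (M * M') S U) :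
    cond M S (imageT M S) ∧ cond M' (imageT M S) U := by
  refine ⟨⟨?_, ?_⟩, ?_, ?_⟩
  · intro p hp
    obtain ⟨r, hr, hpr⟩ := h.1 p hp
    obtain ⟨q, hpq, hqr⟩ := exists_of_mul_ne_zero hpr
    exact ⟨q, mem_filter.2 ⟨mem_univ q, p, hp, hpq⟩, hpq⟩
  · intro q hq
    obtain ⟨p, hp, hpq⟩ := (mem_filter.1 hq).2
    exact ⟨p, hp, hpq⟩
  · intro q hq
    obtain ⟨p, hp, hpq⟩ := (mem_filter.1 hq).2
    obtain ⟨r, hr, hpr⟩ := h.1 p hp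
    obtain ⟨q', hpq', hq'r⟩ := exists_of_mul_ne_zero hpr
    cases hM p q q' hpq hpq'
    exact ⟨r, hr, hq'r⟩
  · intro r hr
    obtain ⟨p, hp, hpr⟩ := h.2 r hr
    obtain ⟨q, hpq, hqr⟩ := exists_of_mul_ne_zero hpr
    exact ⟨q, mem_filter.2 ⟨mem_univ q, p, hp, hpq⟩, hqr⟩

variable (R : Type) [Ring R]

/-- Lift a partial-injection matrix over `ZMod 2` to the matrix acting on subsets, over `R`. -/
def lift (M : Matrix (Fin n) (Fin n) (ZMod 2)) :
    Matrix (Finset (Fin n)) (Finset (Fin n)) R :=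
  Matrix.of fun S T => if cond M S T then 1 else 0

lemma one_entry_ne {p q : Fin n} (h : (1 : Matrix (Fin n) (Fin n) (ZMod 2)) p q ≠ 0) :
    p = q := by
  by_contra hc
  exact h (Matrix.one_apply_ne hc)

lemma lift_one : lift R (1 : Matrix (Fin n) (Fin n) (ZMod 2)) = 1 := by
  ext S T
  show (if cond 1 S T then (1 : R) else 0) = (1 : Matrix _ _ R) S T
  rw [Matrix.one_apply]
  by_cases h : S = T
  · subst h
    rw [if_pos rfl, if_pos]
    constructor
    · intro p hp
      exact ⟨p, hp, by simp [Matrix.one_apply]⟩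
    · intro p hp
      exact ⟨p, hp, by simp [Matrix.one_apply]⟩
  · rw [if_neg h, if_neg]
    intro hc
    apply h
    ext p
    constructor
    · intro hp
      obtain ⟨q, hq, hpq⟩ := hc.1 p hp
      cases one_entry_ne hpq
      exact hq
    · intro hp
      obtain ⟨q, hq, hpq⟩ := hc.2 p hp
      cases one_entry_ne hpq
      exact hq

lemma lift_mul {M M' : Matrix (Fin n) (Fin n) (ZMod 2)} (hM : rowOk M) :
    (lift R M) * (lift R M') = lift R (M * M') := by
  ext S U
  rw [Matrix.mul_apply]
  show (∑ T, (if cond M S T then (1:R) else 0) * (if cond M' T U then (1:R) else 0))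
      = if cond (M * M') S U then (1:R) else 0
  by_cases h : cond (M * M') S U
  · obtain ⟨h1, h2⟩ := cond_of_mul hM h
    rw [if_pos h]
    refine (Finset.sum_eq_single (imageT M S) (fun T _ hT => ?_)
      (fun habs => absurd (mem_univ _) habs)).trans ?_
    · by_cases hc : cond M S T
      · exact absurd (cond_right_unique hM hc h1) hT
      · rw [if_neg hc, zero_mul]
    · rw [if_pos h1, if_pos h2, one_mul]
  · rw [if_neg h]
    refine Finset.sum_eq_zero (fun T _ => ?_)
    by_cases h1 : cond M S T
    · by_cases h2 : cond M' T U
      · exact absurd (cond_mul hM h1 h2) h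
      · rw [if_neg h2, mul_zero]
    · rw [if_neg h1, zero_mul]

lemma lift_apply_ne_zero {M : Matrix (Fin n) (Fin n) (ZMod 2)} {S T : Finset (Fin n)}
    (h : lift R M S T ≠ 0) : cond M S T := by
  by_contra hc
  apply h
  show (if cond M S T then (1:R) else 0) = 0
  rw [if_neg hc]

lemma card_eq_of_cond {M : Matrix (Fin n) (Fin n) (ZMod 2)} (hrow : rowOk M) (hcol : colOk M)
    {S T : Finset (Fin n)} (h : cond M S T) : S.card = T.card := by
  classical
  refine Finset.card_bij (fun p hp => (h.1 p hp).choose) ?_ ?_ ?_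
  · intro p hp
    exact (h.1 p hp).choose_spec.1
  · intro p hp p' hp' heq
    have heq' : (h.1 p hp).choose = (h.1 p' hp').choose := heq
    have h1 := (h.1 p hp).choose_spec.2
    have h2 := (h.1 p' hp').choose_spec.2
    rw [heq'] at h1
    exact hcol p p' _ h1 h2
  · intro q hq
    obtain ⟨p, hp, hpq⟩ := h.2 q hq
    exact ⟨p, hp, hrow p _ q (h.1 p hp).choose_spec.2 hpq⟩

end MatLemmas

section IntSums

lemma int_sum_pow {γ : Type} [DecidableEq γ] (G : Finset γ) :
    (∑ S ∈ G.powerset, (-2 : ℤ) ^ S.card) = (-1) ^ G.card := by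
  induction G using Finset.induction_on with
  | empty => simp
  | @insert a G ha ih =>
    rw [Finset.sum_powerset_insert ha, ih, Finset.card_insert_of_notMem ha]
    have : ∀ t ∈ G.powerset, (-2:ℤ) ^ (insert a t).card = (-2) * (-2) ^ t.card := by
      intro t ht
      rw [Finset.card_insert_of_notMem (fun hc => ha (Finset.mem_powerset.1 ht hc))]
      ring
    rw [Finset.sum_congr rfl this, ← Finset.mul_sum, ih]
    ring

lemma int_sum_powerset {γ : Type} [DecidableEq γ] (G : Finset γ) :
    (∑ S ∈ G.powerset, if S.Nonempty then (-2 : ℤ) ^ (S.card - 1) else 0)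
      = if Odd G.card then 1 else 0 := by
  induction G using Finset.induction_on with
  | empty => simp
  | @insert a G ha ih =>
    rw [Finset.sum_powerset_insert ha, ih]
    have : ∀ t ∈ G.powerset,
        (if (insert a t).Nonempty then (-2:ℤ) ^ ((insert a t).card - 1) else 0)
          = (-2:ℤ) ^ t.card := by
      intro t ht
      rw [if_pos (Finset.insert_nonempty a t),
        Finset.card_insert_of_notMem (fun hc => ha (Finset.mem_powerset.1 ht hc))]
      simp
    rw [Finset.sum_congr rfl this, int_sum_pow, Finset.card_insert_of_notMem ha]
    rcases Nat.even_or_odd G.card with he | ho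
    · rw [if_neg (Nat.not_odd_iff_even.2 he), Even.neg_one_pow he,
        if_pos (Even.add_one he)]
      ring
    · rw [if_pos ho, Odd.neg_one_pow ho,
        if_neg (Nat.not_odd_iff_even.2 (Odd.add_one ho))]
      ring

end IntSums

end RevWAAux

namespace RevWAAux

open RevWA Matrix Finset

variable {α : Type}

lemma matWord_ok (A : WA (ZMod 2) α) (hA : A.Reversible) (w : List α) :
    rowOk (A.matWord w) ∧ colOk (A.matWord w) := by
  induction w with
  | nil => rw [matWord_nil]; exact ⟨rowOk_one, colOk_one⟩
  | cons a w ih => rw [matWord_cons]; exact ⟨rowOk_mul (hA a).1 ih.1, colOk_mul (hA a).2 ih.2⟩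

def AwSet (A : WA (ZMod 2) α) (w : List α) : Finset (Fin A.n) :=
  @Finset.filter _ (fun p => A.init p ≠ 0 ∧ ∃ q, A.matWord w p q ≠ 0 ∧ A.final q ≠ 0)
    (fun _ => instDecidableAnd) univ

lemma mem_AwSet (A : WA (ZMod 2) α) (w : List α) (p : Fin A.n) :
    p ∈ AwSet A w ↔ p ∈ univ ∧ (A.init p ≠ 0 ∧ ∃ q, A.matWord w p q ≠ 0 ∧ A.final q ≠ 0) :=
  @mem_filter _ (fun p => A.init p ≠ 0 ∧ ∃ q, A.matWord w p q ≠ 0 ∧ A.final q ≠ 0)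
    (fun _ => instDecidableAnd) univ p

lemma zmod2_eq_one : ∀ x : ZMod 2, x ≠ 0 → x = 1 := by decide

lemma series_zmod (A : WA (ZMod 2) α) (hA : A.Reversible) (w : List α) :
    A.series w = ((AwSet A w).card : ZMod 2) := by
  have hrow : rowOk (A.matWord w) := (matWord_ok A hA w).1
  show A.init ⬝ᵥ (A.matWord w).mulVec A.final = _
  rw [dotProduct]
  have key : ∀ p, A.init p * (A.matWord w).mulVec A.final p
      = if A.init p ≠ 0 ∧ ∃ q, A.matWord w p q ≠ 0 ∧ A.final q ≠ 0 then 1 else 0 := by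
    intro p
    show A.init p * (∑ q, A.matWord w p q * A.final q) = _
    by_cases hi : A.init p = 0
    · rw [if_neg (fun hcon => hcon.1 hi), hi, zero_mul]
    · by_cases hex : ∃ q, A.matWord w p q ≠ 0 ∧ A.final q ≠ 0
      · obtain ⟨q0, hq1, hq2⟩ := hex
        rw [if_pos ⟨hi, q0, hq1, hq2⟩, zmod2_eq_one _ hi, one_mul]
        refine (Finset.sum_eq_single q0 (fun x _ hx => ?_)
          (fun hh => absurd (mem_univ _) hh)).trans ?_
        · have hz : A.matWord w p x = 0 := by
            by_contra hc
            exact hx (hrow p x q0 hc hq1)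
          rw [hz, zero_mul]
        · rw [zmod2_eq_one _ hq1, zmod2_eq_one _ hq2, one_mul]
      · rw [if_neg (fun hcon => hex hcon.2), zmod2_eq_one _ hi, one_mul]
        refine Finset.sum_eq_zero fun q _ => ?_
        by_cases h1 : A.matWord w p q = 0
        · rw [h1, zero_mul]
        · have h2 : A.final q = 0 := by
            by_contra h2
            exact hex ⟨q, h1, h2⟩
          rw [h2, mul_zero]
  rw [Finset.sum_congr rfl (fun p _ => key p), Finset.sum_boole]
  rfl

noncomputable def eqv (A : WA (ZMod 2) α) : Finset (Fin A.n) ≃ Fin (Fintype.card (Finset (Fin A.n))) :=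
  Fintype.equivFin _

noncomputable def liftWA (R : Type) [Ring R] (A : WA (ZMod 2) α) : WA R α where
  n := Fintype.card (Finset (Fin A.n))
  init v := if (eqv A).symm v ⊆ univ.filter (fun p => A.init p ≠ 0) then 1 else 0
  trans a := (lift R (A.trans a)).submatrix (eqv A).symm (eqv A).symm
  final v := if ((eqv A).symm v).Nonempty ∧ (eqv A).symm v ⊆ univ.filter (fun q => A.final q ≠ 0)
      then (-2 : R) ^ (((eqv A).symm v).card - 1) else 0

lemma liftWA_reversible (R : Type) [Ring R] (A : WA (ZMod 2) α) (hA : A.Reversible) :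
    (liftWA R A).Reversible := by
  intro a
  constructor
  · intro v v' v'' h h'
    have hc := lift_apply_ne_zero R (M := A.trans a) h
    have hc' := lift_apply_ne_zero R (M := A.trans a) h'
    exact (eqv A).symm.injective (cond_right_unique (hA a).1 hc hc')
  · intro v v' v'' h h'
    have hc := lift_apply_ne_zero R (M := A.trans a) h
    have hc' := lift_apply_ne_zero R (M := A.trans a) h'
    exact (eqv A).symm.injective (cond_left_unique (hA a).2 hc hc')

lemma liftWA_matWord (R : Type) [Ring R] (A : WA (ZMod 2) α) (hA : A.Reversible) (w : List α) :
    (liftWA R A).matWord w = (lift R (A.matWord w)).submatrix (eqv A).symm (eqv A).symm := by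
  induction w with
  | nil =>
    rw [matWord_nil, matWord_nil, lift_one, Matrix.submatrix_one_equiv]
    rfl
  | cons a w ih =>
    rw [matWord_cons, matWord_cons, ih]
    have htr : (liftWA R A).trans a
        = (lift R (A.trans a)).submatrix (eqv A).symm (eqv A).symm := rfl
    rw [htr]
    erw [Matrix.submatrix_mul_equiv, lift_mul R (hA a).1]

end RevWAAux

namespace RevWAAux

open RevWA Matrix Finset

variable {α : Type}

lemma sum_indicator_powerset (R : Type) [Ring R] {γ : Type} [DecidableEq γ] [Fintype γ]
    (G : Finset γ) :
    (∑ S : Finset γ, if S.Nonempty ∧ S ⊆ G then (-2 : R) ^ (S.card - 1) else 0)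
      = if Odd G.card then 1 else 0 := by
  classical
  have hsplit : ∀ S : Finset γ, (if S.Nonempty ∧ S ⊆ G then (-2 : R) ^ (S.card - 1) else 0)
      = if S ⊆ G then (if S.Nonempty then (-2 : R) ^ (S.card - 1) else 0) else 0 := by
    intro S
    by_cases h1 : S ⊆ G <;> by_cases h2 : S.Nonempty <;> simp [h1, h2]
  rw [Finset.sum_congr rfl (fun S _ => hsplit S), ← Finset.sum_filter]
  have huniv : univ.filter (fun S : Finset γ => S ⊆ G) = G.powerset := by
    ext S
    simp [Finset.mem_powerset]
  rw [huniv]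
  have hz := int_sum_powerset G
  have hcast : (∑ S ∈ G.powerset, (if S.Nonempty then (-2 : R) ^ (S.card - 1) else 0))
      = ((∑ S ∈ G.powerset, (if S.Nonempty then (-2 : ℤ) ^ (S.card - 1) else 0) : ℤ) : R) := by
    rw [Int.cast_sum]
    refine Finset.sum_congr rfl (fun S _ => ?_)
    split_ifs <;> push_cast <;> ring
  rw [hcast, hz]
  split_ifs <;> simp

lemma liftWA_series (R : Type) [Ring R] (A : WA (ZMod 2) α) (hA : A.Reversible) (w : List α) :
    (liftWA R A).series w = if Odd (AwSet A w).card then 1 else 0 := by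
  classical
  obtain ⟨hrow, hcol⟩ := matWord_ok A hA w
  have step1 : (liftWA R A).series w
      = ∑ S : Finset (Fin A.n), (if S ⊆ univ.filter (fun p => A.init p ≠ 0) then (1:R) else 0)
          * ∑ T : Finset (Fin A.n), (lift R (A.matWord w) S T)
            * (if T.Nonempty ∧ T ⊆ univ.filter (fun q => A.final q ≠ 0)
                then (-2:R) ^ (T.card - 1) else 0) := by
    show (liftWA R A).init ⬝ᵥ ((liftWA R A).matWord w).mulVec (liftWA R A).final = _
    rw [liftWA_matWord R A hA w, dotProduct]
    refine Fintype.sum_equiv (eqv A).symm _ _ (fun v => ?_)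
    congr 1
    show ∑ v', (lift R (A.matWord w)) ((eqv A).symm v) ((eqv A).symm v')
        * (liftWA R A).final v' = _
    exact Fintype.sum_equiv (eqv A).symm _ _ (fun v' => rfl)
  have step2 : ∀ S : Finset (Fin A.n),
      (∑ T : Finset (Fin A.n), (lift R (A.matWord w) S T)
          * (if T.Nonempty ∧ T ⊆ univ.filter (fun q => A.final q ≠ 0)
              then (-2:R) ^ (T.card - 1) else 0))
        = if S.Nonempty ∧ (∀ p ∈ S, ∃ q, A.matWord w p q ≠ 0 ∧ A.final q ≠ 0)
            then (-2:R) ^ (S.card - 1) else 0 := by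
    intro S
    by_cases hS : S.Nonempty ∧ ∀ p ∈ S, ∃ q, A.matWord w p q ≠ 0 ∧ A.final q ≠ 0
    · set T0 : Finset (Fin A.n) := univ.filter (fun q => ∃ p ∈ S, A.matWord w p q ≠ 0)
        with hT0def
      have hc1 : cond (A.matWord w) S T0 := by
        constructor
        · intro p hp
          obtain ⟨q, hq1, hq2⟩ := hS.2 p hp
          exact ⟨q, by rw [hT0def]; exact mem_filter.2 ⟨mem_univ q, p, hp, hq1⟩, hq1⟩
        · intro q hq
          rw [hT0def] at hq
          exact (mem_filter.1 hq).2
      have hsub : T0 ⊆ univ.filter (fun q => A.final q ≠ 0) := by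
        intro q hq
        rw [hT0def] at hq
        obtain ⟨p, hp, hpq⟩ := (mem_filter.1 hq).2
        obtain ⟨q', hq'1, hq'2⟩ := hS.2 p hp
        cases hrow p q q' hpq hq'1
        exact mem_filter.2 ⟨mem_univ q, hq'2⟩
      have hne : T0.Nonempty := by
        obtain ⟨p, hp⟩ := hS.1
        obtain ⟨q, hq1, _⟩ := hS.2 p hp
        exact ⟨q, by rw [hT0def]; exact mem_filter.2 ⟨mem_univ q, p, hp, hq1⟩⟩
      have hcardeq : S.card = T0.card := card_eq_of_cond hrow hcol hc1
      rw [if_pos hS]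
      refine (Finset.sum_eq_single T0 (fun T _ hT => ?_)
        (fun hh => absurd (mem_univ _) hh)).trans ?_
      · by_cases hcT : cond (A.matWord w) S T
        · exact absurd (cond_right_unique hrow hcT hc1) hT
        · show (if cond (A.matWord w) S T then (1:R) else 0) * _ = 0
          rw [if_neg hcT, zero_mul]
      · show (if cond (A.matWord w) S T0 then (1:R) else 0) * _ = _
        rw [if_pos hc1, one_mul, if_pos ⟨hne, hsub⟩, hcardeq]
    · rw [if_neg hS]
      refine Finset.sum_eq_zero fun T _ => ?_
      show (if cond (A.matWord w) S T then (1:R) else 0) * _ = 0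
      by_cases hcT : cond (A.matWord w) S T
      · by_cases hft : T.Nonempty ∧ T ⊆ univ.filter (fun q => A.final q ≠ 0)
        · exfalso
          apply hS
          constructor
          · obtain ⟨q, hq⟩ := hft.1
            obtain ⟨p, hp, _⟩ := hcT.2 q hq
            exact ⟨p, hp⟩
          · intro p hp
            obtain ⟨q, hq, hpq⟩ := hcT.1 p hp
            have hqF := (mem_filter.1 (hft.2 hq)).2
            exact ⟨q, hpq, hqF⟩
        · rw [if_neg hft, mul_zero]
      · rw [if_neg hcT, zero_mul]
  have step3 : ∀ S : Finset (Fin A.n),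
      (if S ⊆ univ.filter (fun p => A.init p ≠ 0) then (1:R) else 0)
        * (if S.Nonempty ∧ (∀ p ∈ S, ∃ q, A.matWord w p q ≠ 0 ∧ A.final q ≠ 0)
            then (-2:R) ^ (S.card - 1) else 0)
      = if S.Nonempty ∧ S ⊆ AwSet A w then (-2:R) ^ (S.card - 1) else 0 := by
    intro S
    have hiff : (S ⊆ univ.filter (fun p => A.init p ≠ 0)
        ∧ (S.Nonempty ∧ ∀ p ∈ S, ∃ q, A.matWord w p q ≠ 0 ∧ A.final q ≠ 0))
        ↔ (S.Nonempty ∧ S ⊆ AwSet A w) := by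
      constructor
      · rintro ⟨h1, h2, h3⟩
        refine ⟨h2, fun p hp => ?_⟩
        have hi := (mem_filter.1 (h1 hp)).2
        exact (mem_AwSet A w p).2 ⟨mem_univ p, hi, h3 p hp⟩
      · rintro ⟨h1, h2⟩
        refine ⟨fun p hp => ?_, h1, fun p hp => ?_⟩
        · have := ((mem_AwSet A w p).1 (h2 hp)).2
          exact mem_filter.2 ⟨mem_univ p, this.1⟩
        · exact ((mem_AwSet A w p).1 (h2 hp)).2.2
    rw [boole_mul, ← ite_and]
    exact if_congr hiff rfl rfl
  rw [step1, Finset.sum_congr rfl (fun S _ => by rw [step2 S]),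
    Finset.sum_congr rfl (fun S _ => step3 S), sum_indicator_powerset R (AwSet A w)]

lemma mem_supp_iff_odd (A : WA (ZMod 2) α) (hA : A.Reversible) (w : List α) :
    A.series w ≠ 0 ↔ Odd (AwSet A w).card := by
  rw [series_zmod A hA w, Ne, ZMod.natCast_eq_zero_iff, Nat.odd_iff]
  omega

end RevWAAux


open RevWAAux

open RevWA in
theorem stmt12 (R : Type) [Ring R] (hR : (0 : R) ≠ 1)
    (α : Type) [Fintype α] [Nonempty α]
    (L : Set (List α)) (hL : L ∈ RevL (ZMod 2) α) :
    charSeries R L ∈ Rev R α ∧ L ∈ RevL R α := by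
  classical
  obtain ⟨r, ⟨A, hA, hser⟩, hsupp⟩ := hL
  have hchar : (liftWA R A).series = charSeries R L := by
    funext w
    rw [liftWA_series R A hA w]
    have hw : w ∈ L ↔ Odd (AwSet A w).card := by
      rw [← hsupp]
      show r w ≠ 0 ↔ _
      rw [← hser]
      exact mem_supp_iff_odd A hA w
    show _ = L.indicator 1 w
    by_cases hmem : w ∈ L
    · rw [if_pos (hw.1 hmem), Set.indicator_of_mem hmem, Pi.one_apply]
    · rw [if_neg (fun ho => hmem (hw.2 ho)), Set.indicator_of_notMem hmem]
  have hrev : charSeries R L ∈ Rev R α := ⟨liftWA R A, liftWA_reversible R A hA, hchar⟩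
  refine ⟨hrev, charSeries R L, hrev, ?_⟩
  ext w
  show charSeries R L w ≠ 0 ↔ w ∈ L
  show L.indicator 1 w ≠ 0 ↔ w ∈ L
  by_cases hmem : w ∈ L
  · rw [Set.indicator_of_mem hmem, Pi.one_apply]
    simp only [hmem, iff_true]
    exact fun h => hR h.symm
  · rw [Set.indicator_of_notMem hmem]
    simp [hmem]
end
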